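/- Let a topological group G act continuously on a topological space X, let N ≤ G be a subgroup and L ≤ G an abelian subgroup normalizing N; for z∈X set Δ_z = {ℓ ∈ L : ℓ·z ∈ closure(N·z)}. Suppose x,y ∈ X and ℓ₁, ℓ₂ ∈ L satisfy ℓ₁·y ∈ closure(N·x) and ℓ₂·x ∈ closure(N·y). Then ℓ₁ Δ_y ℓ₂ ⊆ Δ_x; in particular the map ℓ ↦ ℓ₁ ℓ ℓ₂ carries Δ_y into Δ_x. -/

import Mathlib

open Pointwise

/-- If `w ∈ closure (N • z)` then `closure (N • w) ⊆ closure (N • z)`. -/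
lemma orbit_closure_mono {G X : Type*} [Group G] [TopologicalSpace X] [MulAction G X]
    [ContinuousConstSMul G X] (N : Subgroup G) {z w : X}
    (hw : w ∈ closure ((fun n : G => n • z) '' (N : Set G))) :
    closure ((fun n : G => n • w) '' (N : Set G)) ⊆
      closure ((fun n : G => n • z) '' (N : Set G)) := by
  rw [← closure_closure (s := (fun n : G => n • z) '' (N : Set G))]
  apply closure_mono
  rintro _ ⟨n, hn, rfl⟩
  have : n • w ∈ n • closure ((fun m : G => m • z) '' (N : Set G)) := ⟨w, hw, rfl⟩
  rw [← closure_smul] at this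
  refine closure_mono ?_ this
  rintro _ ⟨_, ⟨m, hm, rfl⟩, rfl⟩
  exact ⟨n * m, mul_mem hn hm, mul_smul n m z⟩

/-- For `g` normalizing `N`, `N • (g • z) = g • (N • z)`. -/
lemma orbit_smul_eq {G X : Type*} [Group G] [MulAction G X]
    (N : Subgroup G) {g : G} (hg : g ∈ Subgroup.normalizer (N : Set G)) (z : X) :
    (fun n : G => n • (g • z)) '' (N : Set G) =
      g • ((fun n : G => n • z) '' (N : Set G)) := by
  ext w
  constructor
  · rintro ⟨n, hn, rfl⟩
    refine ⟨(g⁻¹ * n * g) • z, ⟨g⁻¹ * n * g, ?_, rfl⟩, ?_⟩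
    · have := Subgroup.inv_mem (Subgroup.normalizer (N : Set G)) hg
      rw [Subgroup.mem_normalizer_iff] at this
      simpa using (this n).mp hn
    · simp [← mul_smul, mul_assoc]
  · rintro ⟨_, ⟨m, hm, rfl⟩, rfl⟩
    refine ⟨g * m * g⁻¹, ?_, ?_⟩
    · rw [Subgroup.mem_normalizer_iff] at hg
      exact (hg m).mp hm
    · simp [← mul_smul, mul_assoc]

/-- Let `G` act continuously on `X`, `N ≤ G` a subgroup and `L ≤ G` an
abelian subgroup normalizing `N`; for `z ∈ X` set
`Δ_z = {ℓ ∈ L : ℓ • z ∈ closure (N • z)}`. If `ℓ₁ • y ∈ closure (N • x)` and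
`ℓ₂ • x ∈ closure (N • y)` with `ℓ₁, ℓ₂ ∈ L`, then `ℓ₁ Δ_y ℓ₂ ⊆ Δ_x`. -/
theorem stmt4 {G X : Type*} [Group G] [TopologicalSpace G] [IsTopologicalGroup G]
    [TopologicalSpace X] [MulAction G X] [ContinuousSMul G X]
    (N L : Subgroup G) (hLnorm : L ≤ Subgroup.normalizer (N : Set G))
    (hLab : ∀ a ∈ L, ∀ b ∈ L, a * b = b * a)
    (x y : X) (ℓ₁ ℓ₂ : G) (hℓ₁ : ℓ₁ ∈ L) (hℓ₂ : ℓ₂ ∈ L)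
    (h₁ : ℓ₁ • y ∈ closure ((fun n : G => n • x) '' (N : Set G)))
    (h₂ : ℓ₂ • x ∈ closure ((fun n : G => n • y) '' (N : Set G))) :
    ∀ ℓ ∈ {ℓ ∈ (L : Set G) | ℓ • y ∈ closure ((fun n : G => n • y) '' (N : Set G))},
      ℓ₁ * ℓ * ℓ₂ ∈
        {ℓ' ∈ (L : Set G) | ℓ' • x ∈ closure ((fun n : G => n • x) '' (N : Set G))} := by
  rintro ℓ ⟨hℓL, hℓ⟩
  refine ⟨mul_mem (mul_mem hℓ₁ hℓL) hℓ₂, ?_⟩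
  -- ℓ • (ℓ₂ • x) ∈ ℓ • closure (N • y) = closure (N • (ℓ • y)) ⊆ closure (N • y)
  have step1 : ℓ • (ℓ₂ • x) ∈ closure ((fun n : G => n • y) '' (N : Set G)) := by
    apply orbit_closure_mono N hℓ
    have : ℓ • (ℓ₂ • x) ∈ ℓ • closure ((fun n : G => n • y) '' (N : Set G)) := ⟨_, h₂, rfl⟩
    rw [← closure_smul, ← orbit_smul_eq N (hLnorm hℓL)] at this
    exact this
  -- ℓ₁ • (ℓ • ℓ₂ • x) ∈ closure (N • (ℓ₁ • y)) ⊆ closure (N • x)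
  have step2 : ℓ₁ • (ℓ • (ℓ₂ • x)) ∈ closure ((fun n : G => n • x) '' (N : Set G)) := by
    apply orbit_closure_mono N h₁
    have : ℓ₁ • (ℓ • (ℓ₂ • x)) ∈ ℓ₁ • closure ((fun n : G => n • y) '' (N : Set G)) :=
      ⟨_, step1, rfl⟩
    rw [← closure_smul, ← orbit_smul_eq N (hLnorm hℓ₁)] at this
    exact this
  simpa [mul_smul] using step2
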